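/- Let x_0,...,x_{q} be parameters, b ∈ ℝ^{q+1} the vector with entry d! in position d (0-indexed) and zeros elsewhere, and V the Vandermonde matrix with columns (1, x_i, ..., x_i^q). Then the determinant of the matrix obtained from V by replacing its j-th column with b equals (-1)^{j+d}·d!·∏_{m>n, m,n≠j}(x_m - x_n)·S(X_j, q-d), where S(X_j, q-d) is the elementary symmetric polynomial of degree q-d in the parameters {x_m : m ≠ j}. -/

import Mathlib

open Polynomial Matrix Finset

/-- Multilinearity: the determinant of the Vandermonde matrix with `x j` replaced by `X`
expands as a sum of monomials whose coefficients are determinants with a standard basis row. -/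
lemma stmt4_aux_sum (q : ℕ) (x : Fin (q + 1) → ℝ) (j : Fin (q + 1)) :
    (Matrix.vandermonde (fun m => if m = j then (X : ℝ[X]) else C (x m))).det =
      ∑ i : Fin (q + 1), X ^ (i : ℕ) *
        C ((Matrix.vandermonde x).updateRow j (Pi.single i 1)).det := by
  have hW : Matrix.vandermonde (fun m => if m = j then (X : ℝ[X]) else C (x m)) =
      ((Matrix.vandermonde x).map C).updateRow j (fun k => X ^ (k : ℕ)) := by
    ext m k
    by_cases h : m = j <;> simp [Matrix.vandermonde, Matrix.updateRow_apply, h]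
  have hsum : (fun k : Fin (q + 1) => (X : ℝ[X]) ^ (k : ℕ)) =
      ∑ i : Fin (q + 1), (X : ℝ[X]) ^ (i : ℕ) • (Pi.single i 1 : Fin (q+1) → ℝ[X]) := by
    funext k
    simp [Pi.single_apply, Finset.sum_ite_eq', smul_eq_mul]
  rw [hW, hsum]
  have := (Matrix.detRowAlternating :
      (Fin (q+1) → ℝ[X]) [⋀^Fin (q+1)]→ₗ[ℝ[X]] ℝ[X]).map_update_sum Finset.univ j
      (fun i : Fin (q+1) => (X : ℝ[X]) ^ (i : ℕ) • (Pi.single i 1 : Fin (q+1) → ℝ[X]))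
      ((Matrix.vandermonde x).map C)
  rw [show (((Matrix.vandermonde x).map C).updateRow j
      (∑ i : Fin (q + 1), (X : ℝ[X]) ^ (i : ℕ) • (Pi.single i 1 : Fin (q+1) → ℝ[X]))).det =
      (Matrix.detRowAlternating :
      (Fin (q+1) → ℝ[X]) [⋀^Fin (q+1)]→ₗ[ℝ[X]] ℝ[X])
      (Function.update (((Matrix.vandermonde x).map C) : Fin (q+1) → Fin (q+1) → ℝ[X]) j
      (∑ i : Fin (q + 1), (X : ℝ[X]) ^ (i : ℕ) • (Pi.single i 1 : Fin (q+1) → ℝ[X]))) from rfl,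
    this]
  refine Finset.sum_congr rfl fun i _ => ?_
  have h1 : (Matrix.detRowAlternating :
      (Fin (q+1) → ℝ[X]) [⋀^Fin (q+1)]→ₗ[ℝ[X]] ℝ[X])
      (Function.update (((Matrix.vandermonde x).map C) : Fin (q+1) → Fin (q+1) → ℝ[X]) j
      ((X : ℝ[X]) ^ (i : ℕ) • (Pi.single i 1 : Fin (q+1) → ℝ[X]))) =
      (((Matrix.vandermonde x).map C).updateRow j
        ((X : ℝ[X]) ^ (i : ℕ) • (Pi.single i 1 : Fin (q+1) → ℝ[X]))).det := rfl
  rw [h1, Matrix.det_updateRow_smul]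
  congr 1
  have h3 : (⇑C ∘ Pi.single i 1 : Fin (q+1) → ℝ[X]) = Pi.single i 1 := by
    funext k
    simp [Pi.single_apply, apply_ite C]
  have h2 : ((Matrix.vandermonde x).map C).updateRow j ((Pi.single i 1 : Fin (q+1) → ℝ[X])) =
      ((Matrix.vandermonde x).updateRow j (Pi.single i 1)).map C := by
    rw [Matrix.map_updateRow, h3]
  rw [h2, ← RingHom.mapMatrix_apply, ← RingHom.map_det]

/-- Factorization of the same determinant via the Vandermonde formula. -/
lemma stmt4_aux_prod (q : ℕ) (x : Fin (q + 1) → ℝ) (j : Fin (q + 1)) :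
    (Matrix.vandermonde (fun m => if m = j then (X : ℝ[X]) else C (x m))).det =
      C (∏ i : Fin (q + 1), ∏ k ∈ Finset.Ioi i,
          if k ≠ j ∧ i ≠ j then x k - x i else 1) *
        ((-1 : ℝ[X]) ^ (q - (j : ℕ)) *
          ∏ m ∈ Finset.univ.erase j, (X - C (x m))) := by
  set y : Fin (q + 1) → ℝ[X] := fun m => if m = j then X else C (x m) with hy
  rw [Matrix.det_vandermonde]
  have hfac : ∀ i : Fin (q + 1), ∀ k ∈ Finset.Ioi i, y k - y i =
      C (if k ≠ j ∧ i ≠ j then x k - x i else 1) *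
      (if i = j then C (x k) - X else if k = j then X - C (x i) else 1) := by
    intro i k hk
    have hik : i < k := Finset.mem_Ioi.mp hk
    by_cases hi : i = j
    · have hkj : k ≠ j := fun h => absurd (h ▸ hi ▸ hik) (lt_irrefl _)
      simp [hy, hi, hkj]
    · by_cases hk' : k = j
      · simp [hy, hi, hk']
      · simp [hy, hi, hk', map_sub]
  rw [Finset.prod_congr rfl fun i _ => Finset.prod_congr rfl fun k hk => hfac i k hk]
  simp only [Finset.prod_mul_distrib]
  congr 1
  · simp [map_prod]
  rw [← Finset.mul_prod_erase Finset.univ _ (Finset.mem_univ j)]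
  have hBj : (∏ k ∈ Finset.Ioi j,
      if j = j then C (x k) - X else if k = j then X - C (x j) else 1) =
      (-1 : ℝ[X]) ^ (q - (j : ℕ)) * ∏ k ∈ Finset.Ioi j, (X - C (x k)) := by
    have h : ∀ k : Fin (q+1), (if j = j then C (x k) - X else if k = j then X - C (x j) else 1)
        = (-1) * (X - C (x k)) := fun k => by rw [if_pos rfl]; ring
    rw [Finset.prod_congr rfl fun k _ => h k, Finset.prod_mul_distrib, Finset.prod_const,
      Fin.card_Ioi]
    norm_num
  have hBrest : (∏ i ∈ Finset.univ.erase j, ∏ k ∈ Finset.Ioi i,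
      if i = j then C (x k) - X else if k = j then X - C (x i) else 1) =
      ∏ i ∈ Finset.Iio j, (X - C (x i)) := by
    have h1 : ∀ i ∈ Finset.univ.erase j, (∏ k ∈ Finset.Ioi i,
        if i = j then C (x k) - X else if k = j then X - C (x i) else 1) =
        if i < j then X - C (x i) else 1 := by
      intro i hi
      have hij : i ≠ j := Finset.ne_of_mem_erase hi
      simp only [if_neg hij]
      rw [Finset.prod_ite_eq' (Finset.Ioi i) j (fun _ => X - C (x i))]
      simp [Finset.mem_Ioi]
    rw [Finset.prod_congr rfl h1, ← Finset.prod_filter]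
    congr 1
    ext i
    simp only [Finset.mem_filter, Finset.mem_erase, Finset.mem_univ, Finset.mem_Iio, true_and,
      and_true]
    constructor
    · exact fun h => h.2
    · exact fun h => ⟨ne_of_lt h, h⟩
  rw [hBj, hBrest]
  have hunion : Finset.Ioi j ∪ Finset.Iio j = Finset.univ.erase j := by
    ext m
    simp only [Finset.mem_union, Finset.mem_Ioi, Finset.mem_Iio, Finset.mem_erase,
      Finset.mem_univ, and_true]
    omega
  have hdisj : Disjoint (Finset.Ioi j) (Finset.Iio j) := by
    rw [Finset.disjoint_left]
    intro m hm hm'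
    simp only [Finset.mem_Ioi] at hm
    simp only [Finset.mem_Iio] at hm'
    exact absurd (hm.trans hm') (lt_irrefl _)
  rw [← hunion, Finset.prod_union hdisj]
  ring


/-- The determinant of the Vandermonde matrix with its `j`-th column replaced by the
vector with `d!` in position `d` and zeros elsewhere equals
`(-1)^(j+d) d! ∏_{m>n, m,n≠j}(x_m - x_n) · S(X_j, q-d)`. -/
theorem stmt4 (q d : ℕ) (hd : d ≤ q) (x : Fin (q + 1) → ℝ) (j : Fin (q + 1)) :
    ((Matrix.of fun i i' : Fin (q + 1) => x i' ^ (i : ℕ)).updateCol j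
        (fun i => if (i : ℕ) = d then (d.factorial : ℝ) else 0)).det =
      (-1 : ℝ) ^ ((j : ℕ) + d) * d.factorial *
        (∏ m : Fin (q + 1), ∏ n ∈ Finset.Iio m,
          if m ≠ j ∧ n ≠ j then x m - x n else 1) *
        ∑ σ ∈ (Finset.univ.erase j).powersetCard (q - d), ∏ l ∈ σ, x l := by
  have hj : (j : ℕ) ≤ q := Nat.lt_succ_iff.mp j.isLt
  set D : Fin (q + 1) := ⟨d, Nat.lt_succ_of_le hd⟩ with hD
  -- Step 0: reduce to a row replacement in the (transposed) vandermonde matrix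
  have h0 : (Matrix.of fun i i' : Fin (q + 1) => x i' ^ (i : ℕ)) =
      (Matrix.vandermonde x)ᵀ := by
    ext i i'
    simp [Matrix.vandermonde]
  have hb : (fun i : Fin (q + 1) => if (i : ℕ) = d then (d.factorial : ℝ) else 0) =
      (d.factorial : ℝ) • (Pi.single D 1 : Fin (q+1) → ℝ) := by
    funext i
    by_cases h : i = D
    · simp [h, hD, Pi.single_apply]
    · have h' : (i : ℕ) ≠ d := fun hc => h (Fin.ext hc)
      simp [h', Pi.single_apply, h]
  rw [h0, hb, Matrix.updateCol_transpose, Matrix.det_transpose, Matrix.det_updateRow_smul]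
  -- Step 2: the key determinant as a coefficient
  have hcoeff : ((Matrix.vandermonde x).updateRow j (Pi.single D 1)).det =
      ((Matrix.vandermonde (fun m => if m = j then (X : ℝ[X]) else C (x m))).det).coeff d := by
    rw [stmt4_aux_sum q x j, Polynomial.finset_sum_coeff]
    have hterm : ∀ i : Fin (q + 1),
        ((X : ℝ[X]) ^ (i : ℕ) *
          C ((Matrix.vandermonde x).updateRow j (Pi.single i 1)).det).coeff d =
        if i = D then ((Matrix.vandermonde x).updateRow j (Pi.single i 1)).det else 0 := by
      intro i
      rw [mul_comm, Polynomial.coeff_C_mul, Polynomial.coeff_X_pow]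
      by_cases h : i = D
      · subst h
        simp [hD]
      · have h' : d ≠ (i : ℕ) := fun hc => h (Fin.ext hc.symm)
        simp [h, h']
    rw [Finset.sum_congr rfl fun i _ => hterm i, Finset.sum_ite_eq' Finset.univ D]
    simp
  -- Step 4: compute the coefficient from the product form
  have hP := stmt4_aux_prod q x j
  set P : ℝ := ∏ i : Fin (q + 1), ∏ k ∈ Finset.Ioi i,
      if k ≠ j ∧ i ≠ j then x k - x i else 1 with hPdef
  have hcard : Multiset.card (Multiset.map x (Finset.univ.erase j).val) = q := by
    rw [Multiset.card_map]
    simp [Finset.card_erase_of_mem]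
  have hprodform : (∏ m ∈ Finset.univ.erase j, (X - C (x m))) =
      (Multiset.map (fun t => X - C t) (Multiset.map x (Finset.univ.erase j).val)).prod := by
    rw [Multiset.map_map]
    rfl
  have hcoeff2 : ((Matrix.vandermonde
      (fun m => if m = j then (X : ℝ[X]) else C (x m))).det).coeff d =
      P * ((-1 : ℝ) ^ (q - (j : ℕ)) * ((-1 : ℝ) ^ (q - d) *
        ∑ σ ∈ (Finset.univ.erase j).powersetCard (q - d), ∏ l ∈ σ, x l)) := by
    rw [hP]
    have hneg : ((-1 : ℝ[X]) ^ (q - (j : ℕ))) = C ((-1 : ℝ) ^ (q - (j : ℕ))) := by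
      simp [map_pow]
    rw [hneg, show C P * (C ((-1 : ℝ) ^ (q - (j : ℕ))) *
        ∏ m ∈ Finset.univ.erase j, (X - C (x m))) =
        C (P * (-1 : ℝ) ^ (q - (j : ℕ))) * ∏ m ∈ Finset.univ.erase j, (X - C (x m)) by
      rw [C_mul]; ring]
    rw [Polynomial.coeff_C_mul, hprodform,
      Multiset.prod_X_sub_C_coeff _ (le_trans hd (le_of_eq hcard.symm)), hcard,
      Finset.esymm_map_val]
    ring
  rw [hcoeff, hcoeff2]
  -- Step 5: signs and reindexing of the product
  have hprodswap : P = ∏ m : Fin (q + 1), ∏ n ∈ Finset.Iio m,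
      if m ≠ j ∧ n ≠ j then x m - x n else 1 := by
    rw [hPdef]
    exact Finset.prod_comm' (by simp)
  have hsign : (-1 : ℝ) ^ (q - (j : ℕ)) * (-1 : ℝ) ^ (q - d) = (-1 : ℝ) ^ ((j : ℕ) + d) := by
    have key : (q - (j : ℕ)) + (q - d) + ((j : ℕ) + d) = 2 * q := by omega
    have hb2 : (-1 : ℝ) ^ ((j : ℕ) + d) * (-1 : ℝ) ^ ((j : ℕ) + d) = 1 := by
      rw [← pow_add, ← two_mul, pow_mul]
      norm_num
    calc (-1 : ℝ) ^ (q - (j : ℕ)) * (-1 : ℝ) ^ (q - d)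
        = (-1 : ℝ) ^ ((q - (j : ℕ)) + (q - d)) * ((-1 : ℝ) ^ ((j : ℕ) + d) *
            (-1 : ℝ) ^ ((j : ℕ) + d)) := by rw [hb2, pow_add]; ring
      _ = (-1 : ℝ) ^ ((q - (j : ℕ)) + (q - d) + ((j : ℕ) + d)) * (-1 : ℝ) ^ ((j : ℕ) + d) := by
            rw [pow_add, pow_add]; ring
      _ = (-1 : ℝ) ^ ((j : ℕ) + d) := by rw [key, pow_mul]; norm_num
  rw [hprodswap] at *
  rw [← hsign]
  ring
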